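/- arXiv:2508.21465 — 12 statements merged into one kernel-verified Lean document; each statement's English description precedes it below -/
import Mathlib

section
/- Let R be a right Bézout ring of stable range 2. Then for each pair (a,b) ∈ R², there exist d, a₁, b₁ ∈ R such that a = d·a₁, b = d·b₁, and a₁R + b₁R = R. -/
/-- Lemma 1: In a right Bézout ring of stable range 2, every pair has a
"common divisor" presentation `a = d*a₁`, `b = d*b₁` with `a₁R + b₁R = R`. -/
theorem stmt_0 {R : Type*} [Ring R] [Nontrivial R]
    (hBez : ∀ a b : R, ∃ d : R,
      {x : R | ∃ u v : R, x = a * u + b * v} = {x : R | ∃ u : R, x = d * u})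
    (hSR2 : ∀ a b c : R, (∃ u v w : R, a * u + b * v + c * w = 1) →
      ∃ l m : R, ∃ u v : R, (a + c * l) * u + (b + c * m) * v = 1)
    (a b : R) :
    ∃ d a₁ b₁ : R, a = d * a₁ ∧ b = d * b₁ ∧ ∃ u v : R, a₁ * u + b₁ * v = 1 := by
  obtain ⟨d, hd⟩ := hBez a b
  have ha : a ∈ {x : R | ∃ u : R, x = d * u} := by
    rw [← hd]; exact ⟨1, 0, by noncomm_ring⟩
  have hb : b ∈ {x : R | ∃ u : R, x = d * u} := by
    rw [← hd]; exact ⟨0, 1, by noncomm_ring⟩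
  have hdm : d ∈ {x : R | ∃ u v : R, x = a * u + b * v} := by
    rw [hd]; exact ⟨1, by noncomm_ring⟩
  obtain ⟨a₁, ha₁⟩ := ha
  obtain ⟨b₁, hb₁⟩ := hb
  obtain ⟨u, v, huv⟩ := hdm
  set c : R := 1 - (a₁ * u + b₁ * v) with hc
  have hdc : d * c = 0 := by
    have : d * (a₁ * u + b₁ * v) = a * u + b * v := by
      rw [ha₁, hb₁]; noncomm_ring
    rw [hc, mul_sub, mul_one, this, ← huv, sub_self]
  obtain ⟨l, m, u', v', h⟩ := hSR2 a₁ b₁ c ⟨u, v, 1, by rw [hc]; noncomm_ring⟩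
  refine ⟨d, a₁ + c * l, b₁ + c * m, ?_, ?_, u', v', h⟩
  · rw [mul_add, ← mul_assoc, hdc, zero_mul, add_zero, ha₁]
  · rw [mul_add, ← mul_assoc, hdc, zero_mul, add_zero, hb₁]
end

section
/- Every right Bézout ring of stable range 1 is a ring of right almost stable range 1. -/
/-- Every right Bézout ring of stable range 1 is a ring of right almost stable
range 1: every nonzero element is an element of right almost stable range 1. -/
theorem stmt_1 {R : Type*} [Ring R] [Nontrivial R]
    (hBez : ∀ a b : R, ∃ d : R,
      {x : R | ∃ u v : R, x = a * u + b * v} = {x : R | ∃ u : R, x = d * u})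
    (hSR1 : ∀ a b : R, (∃ u v : R, a * u + b * v = 1) →
      ∃ l : R, ∃ u : R, (a + b * l) * u = 1) :
    ∀ a : R, a ≠ 0 → ∀ b c : R, (∃ u v w : R, a * u + b * v + c * w = 1) →
      ∃ l : R, ∃ u v : R, a * u + (b + c * l) * v = 1 := by
  intro a _ b c ⟨u, v, w, huvw⟩
  obtain ⟨d, hd⟩ := hBez a c
  -- d is in the right ideal generated by a and c
  have hdmem : d ∈ {x : R | ∃ u v : R, x = a * u + c * v} := by
    rw [hd]; exact ⟨1, (mul_one d).symm⟩
  obtain ⟨p, q, hpq⟩ := hdmem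
  -- a and c are multiples of d
  have hamem : a ∈ {x : R | ∃ u : R, x = d * u} := by
    rw [← hd]; exact ⟨1, 0, by noncomm_ring⟩
  have hcmem : c ∈ {x : R | ∃ u : R, x = d * u} := by
    rw [← hd]; exact ⟨0, 1, by noncomm_ring⟩
  obtain ⟨a₀, ha₀⟩ := hamem
  obtain ⟨c₀, hc₀⟩ := hcmem
  -- b and d generate the whole noncomm_ring
  have hbd : ∃ s t : R, b * s + d * t = 1 := by
    refine ⟨v, a₀ * u + c₀ * w, ?_⟩
    have : a * u + b * v + c * w = 1 := huvw
    rw [ha₀, hc₀] at this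
    rw [← this]; noncomm_ring
  obtain ⟨l, e, hle⟩ := hSR1 b d hbd
  refine ⟨q * l, p * l * e, e, ?_⟩
  rw [hpq] at hle
  rw [← hle]; noncomm_ring
end

section
/- Let R be a right Bézout ring. If for each pair (a,b) ∈ R² with aR + bR = R there exists λ ∈ R such that a + bλ is an element of right almost stable range 1, then R has stable range 2. -/
/-- If in a right Bézout ring every unimodular pair `(a,b)` can be completed
to an element `a + bλ` of right almost stable range 1, then the ring has
stable range 2. -/
theorem stmt_4 {R : Type*} [Ring R] [Nontrivial R]
    (hBez : ∀ a b : R, ∃ d : R,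
      {x : R | ∃ u v : R, x = a * u + b * v} = {x : R | ∃ u : R, x = d * u})
    (hyp : ∀ a b : R, (∃ u v : R, a * u + b * v = 1) →
      ∃ l : R, a + b * l ≠ 0 ∧
        ∀ b' c' : R, (∃ u v w : R, (a + b * l) * u + b' * v + c' * w = 1) →
          ∃ m : R, ∃ u v : R, (a + b * l) * u + (b' + c' * m) * v = 1) :
    ∀ a b c : R, (∃ u v w : R, a * u + b * v + c * w = 1) →
      ∃ l m : R, ∃ u v : R, (a + c * l) * u + (b + c * m) * v = 1 := by
  intro a b c ⟨u, v, w, huvw⟩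
  obtain ⟨d, hd⟩ := hBez b c
  -- d = b*u₀ + c*v₀
  have hdmem : d ∈ {x : R | ∃ u v : R, x = b * u + c * v} := by
    rw [hd]; exact ⟨1, (mul_one d).symm⟩
  obtain ⟨u₀, v₀, hd0⟩ := hdmem
  -- b*v + c*w = d*r
  have hmem : b * v + c * w ∈ {x : R | ∃ u : R, x = d * u} := by
    rw [← hd]; exact ⟨v, w, rfl⟩
  obtain ⟨r, hr⟩ := hmem
  -- (a, d) unimodular
  have h1 : a * u + d * r = 1 := by rw [← hr, ← add_assoc]; exact huvw
  obtain ⟨l, hne, hprop⟩ := hyp a d ⟨u, r, h1⟩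
  -- d*(r - l*u) ∈ bR + cR
  have hmem2 : d * (r - l * u) ∈ {x : R | ∃ u v : R, x = b * u + c * v} := by
    rw [hd]; exact ⟨r - l * u, rfl⟩
  obtain ⟨v₁, w₁, hvw⟩ := hmem2
  have htriple : ∃ u' v' w' : R, (a + d * l) * u' + b * v' + c * w' = 1 := by
    refine ⟨u, v₁, w₁, ?_⟩
    have key : (a + d * l) * u + d * (r - l * u) = a * u + d * r := by noncomm_ring
    rw [add_assoc, ← hvw, key]; exact h1
  obtain ⟨m, u', v', hfin⟩ := hprop b c htriple
  refine ⟨v₀ * l - m * (u₀ * l), m, u', u₀ * l * u' + v', ?_⟩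
  have hd0' : d = b * u₀ + c * v₀ := hd0
  calc (a + c * (v₀ * l - m * (u₀ * l))) * u' + (b + c * m) * (u₀ * l * u' + v')
      = (a + (b * u₀ + c * v₀) * l) * u' + (b + c * m) * v' := by noncomm_ring
    _ = (a + d * l) * u' + (b + c * m) * v' := by rw [← hd0']
    _ = 1 := hfin
end

section
/- Let R be a commutative ring. If every proper homomorphic image of R has stable range 1, then for every triple (a,b,c) ∈ R³ with a ≠ 0 and aR + bR + cR = R, there exists λ ∈ R such that aR + (b + cλ)R = R. -/
/-- If every proper homomorphic image of a commutative ring `R` has stable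
range 1, then for every triple `(a,b,c)` with `a ≠ 0` and `aR + bR + cR = R`
there exists `λ` with `aR + (b + cλ)R = R`. -/
theorem stmt_5 {R : Type*} [CommRing R] [Nontrivial R]
    (h : ∀ I : Ideal R, I ≠ ⊥ →
      ∀ x y : R ⧸ I, (∃ u v : R ⧸ I, x * u + y * v = 1) →
        ∃ t : R ⧸ I, IsUnit (x + y * t)) :
    ∀ a b c : R, a ≠ 0 → (∃ u v w : R, a * u + b * v + c * w = 1) →
      ∃ l : R, ∃ u v : R, a * u + (b + c * l) * v = 1 := by
  intro a b c ha ⟨u, v, w, huvw⟩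
  set I : Ideal R := Ideal.span {a} with hI
  have hIne : I ≠ ⊥ := by
    simp only [hI, Ne, Ideal.span_singleton_eq_bot]
    exact ha
  have hmem : a ∈ I := Ideal.mem_span_singleton_self a
  let π := Ideal.Quotient.mk I
  have h1 : π b * π v + π c * π w = 1 := by
    have : π (a * u + b * v + c * w) = π 1 := by rw [huvw]
    simpa [map_add, map_mul, (show π a = 0 from Ideal.Quotient.eq_zero_iff_mem.mpr hmem)] using this
  obtain ⟨t, ht⟩ := h I hIne (π b) (π c) ⟨π v, π w, h1⟩
  obtain ⟨l, rfl⟩ := Ideal.Quotient.mk_surjective t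
  obtain ⟨s, hs⟩ := ht.exists_right_inv
  obtain ⟨r, rfl⟩ := Ideal.Quotient.mk_surjective s
  refine ⟨l, ?_⟩
  have : π ((b + c * l) * r) = π 1 := by
    simpa [map_add, map_mul] using hs
  rw [Ideal.Quotient.eq] at this
  rw [hI, Ideal.mem_span_singleton] at this
  obtain ⟨d, hd⟩ := this
  exact ⟨-d, r, by linear_combination hd⟩
end

section
/- Let R be a commutative ring. If for every triple (a,b,c) ∈ R³ with a ≠ 0 and aR + bR + cR = R there exists λ ∈ R such that aR + (b + cλ)R = R, then for every nonzero ideal I of R the quotient R/I has stable range 1. -/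
/-- If in a commutative ring `R` for every triple `(a,b,c)` with `a ≠ 0` and
`aR + bR + cR = R` there exists `λ` with `aR + (b + cλ)R = R`, then every
proper homomorphic image `R/I` (`I ≠ ⊥`) has stable range 1. -/
theorem stmt_6 {R : Type*} [CommRing R] [Nontrivial R]
    (h : ∀ a b c : R, a ≠ 0 → (∃ u v w : R, a * u + b * v + c * w = 1) →
      ∃ l : R, ∃ u v : R, a * u + (b + c * l) * v = 1) :
    ∀ I : Ideal R, I ≠ ⊥ →
      ∀ x y : R ⧸ I, (∃ u v : R ⧸ I, x * u + y * v = 1) →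
        ∃ t : R ⧸ I, IsUnit (x + y * t) := by
  intro I hI x y ⟨u, v, huv⟩
  obtain ⟨b, rfl⟩ := Ideal.Quotient.mk_surjective x
  obtain ⟨c, rfl⟩ := Ideal.Quotient.mk_surjective y
  obtain ⟨u', rfl⟩ := Ideal.Quotient.mk_surjective u
  obtain ⟨v', rfl⟩ := Ideal.Quotient.mk_surjective v
  set i : R := 1 - (b * u' + c * v') with hi
  have hiI : i ∈ I := by
    have : (Ideal.Quotient.mk I) i = 0 := by
      simp only [hi, map_sub, map_add, map_mul, map_one]
      rw [← map_mul, ← map_mul]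
      rw [show ((Ideal.Quotient.mk I) (b*u') + (Ideal.Quotient.mk I) (c*v') : R ⧸ I)
          = (Ideal.Quotient.mk I) b * (Ideal.Quotient.mk I) u'
          + (Ideal.Quotient.mk I) c * (Ideal.Quotient.mk I) v' by simp [map_mul], huv]
      ring
    exact (Ideal.Quotient.eq_zero_iff_mem).mp this
  -- choose a nonzero element a ∈ I with ∃ u v w, a*u + b*v + c*w = 1
  have key : ∃ a : R, a ∈ I ∧ a ≠ 0 ∧ ∃ u v w : R, a * u + b * v + c * w = 1 := by
    by_cases hiz : i = 0
    · obtain ⟨a, haI, ha0⟩ := Submodule.exists_mem_ne_zero_of_ne_bot hI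
      refine ⟨a, haI, ha0, 0, u', v', ?_⟩
      have : b * u' + c * v' = 1 := by
        have := hiz
        rw [hi, sub_eq_zero] at this
        exact this.symm
      rw [mul_zero, zero_add, this]
    · exact ⟨i, hiI, hiz, 1, u', v', by rw [mul_one, hi]; ring⟩
  obtain ⟨a, haI, ha0, hex⟩ := key
  obtain ⟨l, u₀, v₀, heq⟩ := h a b c ha0 hex
  refine ⟨Ideal.Quotient.mk I l, ?_⟩
  have : ((Ideal.Quotient.mk I) b + (Ideal.Quotient.mk I) c * (Ideal.Quotient.mk I) l)
      * (Ideal.Quotient.mk I) v₀ = 1 := by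
    have h1 : (Ideal.Quotient.mk I) (a * u₀ + (b + c * l) * v₀) = 1 := by rw [heq]; simp
    have h2 : (Ideal.Quotient.mk I) a = 0 := Ideal.Quotient.eq_zero_iff_mem.mpr haI
    simpa [map_add, map_mul, h2] using h1
  exact IsUnit.of_mul_eq_one _ this
end

section
/- Let R be a commutative Bézout ring and let a ∈ R \ {0}. Suppose that for every pair (b,c) ∈ R² with aR + bR + cR = R there exists a factorization a = r·s with rR + bR = R, sR + cR = R, and rR + sR = R. Then R/aR is a clean ring. -/
/-- Theorem 5: in a commutative Bézout ring, if a nonzero element `a` admits,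
for every pair `(b,c)` with `aR + bR + cR = R`, a factorization `a = r*s` with
`rR + bR = R`, `sR + cR = R` and `rR + sR = R`, then `R/aR` is a clean ring. -/
theorem stmt_7 {R : Type*} [CommRing R] [Nontrivial R]
    (hBez : ∀ x y : R, ∃ d : R, Ideal.span {x, y} = Ideal.span {d})
    (a : R) (ha : a ≠ 0)
    (hfac : ∀ b c : R, (∃ u v w : R, a * u + b * v + c * w = 1) →
      ∃ r s : R, a = r * s ∧ (∃ u v : R, r * u + b * v = 1) ∧
        (∃ u v : R, s * u + c * v = 1) ∧ (∃ u v : R, r * u + s * v = 1)) :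
    ∀ x : R ⧸ Ideal.span {a}, ∃ u e : R ⧸ Ideal.span {a},
      IsUnit u ∧ IsIdempotentElem e ∧ x = u + e := by
  intro xbar
  obtain ⟨x, rfl⟩ := Ideal.Quotient.mk_surjective xbar
  obtain ⟨r, s, heq, ⟨u1, v1, h1⟩, ⟨u2, v2, h2⟩, ⟨u3, v3, h3⟩⟩ :=
    hfac x (x - 1) ⟨0, 1, -1, by ring⟩
  set π := Ideal.Quotient.mk (Ideal.span {a}) with hπ
  have hπa : π a = 0 := Ideal.Quotient.eq_zero_iff_mem.mpr (Ideal.mem_span_singleton_self a)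
  set t : R := x - r * u3 with ht
  -- t is coprime to r
  have hA : t * v1 + r * (u1 + u3 * v1) = 1 := by linear_combination h1
  -- t is coprime to s
  have hB : t * v2 + s * (u2 - v3 * v2) = 1 := by linear_combination h2 - v2 * h3
  -- hence t is coprime to a = r*s
  have hP : t * (t * v1 * v2 + v1 * (s * (u2 - v3 * v2)) + r * (u1 + u3 * v1) * v2)
      + a * ((u1 + u3 * v1) * (u2 - v3 * v2)) = 1 := by
    linear_combination (t * v2 + s * (u2 - v3 * v2)) * hA + hB
      + ((u1 + u3 * v1) * (u2 - v3 * v2)) * heq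
  refine ⟨π t, π (r * u3), ?_, ?_, ?_⟩
  · refine IsUnit.of_mul_eq_one
      (π (t * v1 * v2 + v1 * (s * (u2 - v3 * v2)) + r * (u1 + u3 * v1) * v2)) ?_
    have := congrArg π hP
    simpa [map_add, map_mul, hπa] using this
  · show π (r * u3) * π (r * u3) = π (r * u3)
    rw [← map_mul, Ideal.Quotient.eq, Ideal.mem_span_singleton]
    exact ⟨-(u3 * v3), by linear_combination (r * u3) * h3 + (u3 * v3) * heq⟩
  · rw [← map_add]
    congr 1
    ring
end

section
/- Let R be a commutative Bézout ring, a ∈ R \ {0}, and suppose aR + bR + cR = R and a = rs with rR + bR = R, sR + cR = R, and rR + sR = R. Then in R̄ = R/aR there exists an idempotent ē ∈ R̄ such that ē ∈ b̄R̄ and 1̄ − ē ∈ c̄R̄. -/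
/-- In a commutative Bézout ring, if `a ≠ 0`, `aR + bR + cR = R` and `a = r*s`
with `rR + bR = R`, `sR + cR = R`, `rR + sR = R`, then in `R̄ = R/aR` there is
an idempotent `ē ∈ b̄R̄` with `1̄ - ē ∈ c̄R̄`. -/
theorem stmt_8 {R : Type*} [CommRing R] [Nontrivial R]
    (hBez : ∀ x y : R, ∃ d : R, Ideal.span {x, y} = Ideal.span {d})
    (a b c r s : R) (ha : a ≠ 0)
    (hu : ∃ u v w : R, a * u + b * v + c * w = 1)
    (hrs : a = r * s)
    (hrb : ∃ u v : R, r * u + b * v = 1)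
    (hsc : ∃ u v : R, s * u + c * v = 1)
    (hrsu : ∃ u v : R, r * u + s * v = 1) :
    ∃ e : R ⧸ Ideal.span {a}, IsIdempotentElem e ∧
      (∃ x : R ⧸ Ideal.span {a}, e = Ideal.Quotient.mk (Ideal.span {a}) b * x) ∧
      (∃ y : R ⧸ Ideal.span {a}, 1 - e = Ideal.Quotient.mk (Ideal.span {a}) c * y) := by
  obtain ⟨u, v, huv⟩ := hrsu
  obtain ⟨u1, v1, h1⟩ := hrb
  obtain ⟨u2, v2, h2⟩ := hsc
  set I := Ideal.span ({a} : Set R)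
  set mk := Ideal.Quotient.mk I
  have key : ∀ x : R, a ∣ x → mk x = 0 := fun x hx =>
    Ideal.Quotient.eq_zero_iff_mem.mpr (Ideal.mem_span_singleton.mpr hx)
  refine ⟨mk (s * v), ?_, ⟨mk (v1 * (s * v)), ?_⟩, ⟨mk (v2 * (1 - s * v)), ?_⟩⟩
  · have : mk (s * v) * mk (s * v) - mk (s * v) = mk (s * v * (s * v) - s * v) := by
      simp [mk, map_sub, map_mul]
    have h : mk (s * v * (s * v) - s * v) = 0 := by
      apply key
      refine ⟨-(u * v), ?_⟩
      rw [hrs]; linear_combination (s * v) * huv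
    unfold IsIdempotentElem
    linear_combination this + h
  · have h : mk (s * v) - mk b * mk (v1 * (s * v)) = mk (s * v - b * (v1 * (s * v))) := by
      simp [mk, map_sub, map_mul]
    have h2' : mk (s * v - b * (v1 * (s * v))) = 0 := by
      apply key
      refine ⟨u1 * v, ?_⟩
      rw [hrs]; linear_combination (-(s * v)) * h1
    linear_combination h + h2'
  · have h : (1 : R ⧸ I) - mk (s * v) - mk c * mk (v2 * (1 - s * v)) =
        mk ((1 - s * v) - c * (v2 * (1 - s * v))) := by
      simp [mk, map_sub, map_mul]
    have h3 : mk ((1 - s * v) - c * (v2 * (1 - s * v))) = 0 := by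
      apply key
      refine ⟨u2 * u, ?_⟩
      rw [hrs]; linear_combination (-(1 - s * v)) * h2 + (-(s * u2)) * huv
    linear_combination h + h3
end

section
/- Let R be a commutative Bézout domain and a ∈ R \ {0} such that R/aR is a clean ring. Then for each pair (b,c) ∈ R² with aR + bR + cR = R there exists a factorization a = r·s with rR + bR = R, sR + cR = R, and rR + sR = R. -/
/-- Theorem 6: in a commutative Bézout domain, if `R/aR` is clean for a
nonzero `a`, then every pair `(b,c)` with `aR + bR + cR = R` yields a
factorization `a = r*s` with `rR + bR = R`, `sR + cR = R`, `rR + sR = R`. -/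
theorem stmt_9 {R : Type*} [CommRing R] [IsDomain R]
    (hBez : ∀ x y : R, ∃ d : R, Ideal.span {x, y} = Ideal.span {d})
    (a : R) (ha : a ≠ 0)
    (hclean : ∀ x : R ⧸ Ideal.span {a}, ∃ u e : R ⧸ Ideal.span {a},
      IsUnit u ∧ IsIdempotentElem e ∧ x = u + e) :
    ∀ b c : R, (∃ u v w : R, a * u + b * v + c * w = 1) →
      ∃ r s : R, a = r * s ∧ (∃ u v : R, r * u + b * v = 1) ∧
        (∃ u v : R, s * u + c * v = 1) ∧ (∃ u v : R, r * u + s * v = 1) := by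
  intro b c hbc
  obtain ⟨u, v, w, huvw⟩ := hbc
  -- extraction helper for Bézout
  have extract : ∀ (x y d : R), Ideal.span {x, y} = Ideal.span {d} →
      (∃ α, x = d * α) ∧ (∃ β, y = d * β) ∧ (∃ p q, d = p * x + q * y) := by
    intro x y d h
    have hx' : x ∈ Ideal.span ({d} : Set R) := by
      rw [← h]; exact Ideal.mem_span_pair.mpr ⟨1, 0, by ring⟩
    have hy' : y ∈ Ideal.span ({d} : Set R) := by
      rw [← h]; exact Ideal.mem_span_pair.mpr ⟨0, 1, by ring⟩
    have hd' : d ∈ Ideal.span ({x, y} : Set R) := by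
      rw [h]; exact Ideal.mem_span_singleton_self d
    obtain ⟨α, hα⟩ := Ideal.mem_span_singleton'.mp hx'
    obtain ⟨β, hβ⟩ := Ideal.mem_span_singleton'.mp hy'
    obtain ⟨p, q, hpq⟩ := Ideal.mem_span_pair.mp hd'
    exact ⟨⟨α, by rw [← hα]; ring⟩, ⟨β, by rw [← hβ]; ring⟩, ⟨p, q, hpq.symm⟩⟩
  -- clean step
  obtain ⟨Uq, e, hU, he, hx⟩ := hclean (Ideal.Quotient.mk (Ideal.span {a}) (c * w))
  obtain ⟨U, rfl⟩ := hU
  set j : R ⧸ Ideal.span {a} := ((U⁻¹ : (R ⧸ Ideal.span {a})ˣ) : R ⧸ Ideal.span {a}) with hjdef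
  have hj : j * (U : R ⧸ Ideal.span {a}) = 1 := U.inv_mul
  obtain ⟨E, hE⟩ := Ideal.Quotient.mk_surjective (1 - e)
  obtain ⟨P, hP⟩ := Ideal.Quotient.mk_surjective (j * (1 - e))
  obtain ⟨Q, hQ⟩ := Ideal.Quotient.mk_surjective (j * e)
  have hdvd : ∀ z : R, Ideal.Quotient.mk (Ideal.span {a}) z = 0 → ∃ k, z = a * k := by
    intro z hz
    obtain ⟨k, hk⟩ := Ideal.mem_span_singleton'.mp (Ideal.Quotient.eq_zero_iff_mem.mp hz)
    exact ⟨k, by rw [← hk]; ring⟩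
  have he' : e * e = e := he
  obtain ⟨k1, hk1⟩ : ∃ k, E * E - E = a * k := by
    apply hdvd
    rw [map_sub, map_mul, hE]
    linear_combination he'
  obtain ⟨k2, hk2⟩ : ∃ k, E - c * w * P = a * k := by
    apply hdvd
    rw [map_sub, map_mul, hE, hx, hP]
    linear_combination (e - 1) * hj + j * he'
  obtain ⟨k3, hk3⟩ : ∃ k, (1 - E) - (c * w - 1) * Q = a * k := by
    apply hdvd
    rw [map_sub, map_sub, map_mul, map_sub, map_one, hE, hx, hQ]
    linear_combination (-e) * hj + (-j) * he'
  -- Bézout gcds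
  obtain ⟨r, hr⟩ := hBez a E
  obtain ⟨⟨α, hra⟩, ⟨β, hrE⟩, p₁, q₁, hrpq⟩ := extract a E r hr
  obtain ⟨s, hs⟩ := hBez a (1 - E)
  obtain ⟨⟨α', hsa⟩, ⟨β', hsE⟩, p₂, q₂, hspq⟩ := extract a (1 - E) s hs
  -- (A) r, s comaximal
  have hA : r * β + s * β' = 1 := by linear_combination -hrE - hsE
  -- a ∣ r*s
  have hK : r * s = a * (p₁ * (p₂ * a + q₂ * (1 - E)) + q₁ * p₂ * E - q₁ * q₂ * k1) := by
    linear_combination (p₂ * a + q₂ * (1 - E)) * hrpq + r * hspq - q₁ * q₂ * hk1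
  set K : R := p₁ * (p₂ * a + q₂ * (1 - E)) + q₁ * p₂ * E - q₁ * q₂ * k1 with hKdef
  -- α = s * γ
  have hγ : α = s * (α' * β + α * β') := by
    linear_combination -α * hA + β * hsa - β * hra
  set γ : R := α' * β + α * β' with hγdef
  have hars : a = r * s * γ := by linear_combination hra + r * hγ
  have hrs0 : r * s ≠ 0 := by
    intro h
    apply ha
    rw [hars, h, zero_mul]
  have hγK : γ * K = 1 := by
    have : r * s * 1 = r * s * (γ * K) := by linear_combination hK + K * hars
    exact (mul_left_cancel₀ hrs0 this).symm
  -- (B)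
  have hB : r * (β + α * (k3 - u * Q)) + b * (-(v * Q)) = 1 := by
    linear_combination -hrE + (u * Q - k3) * hra - hk3 - Q * huvw
  -- (C)
  have hC : s * (β' + α' * k2) + c * (w * P) = 1 := by
    linear_combination -hsE - hk2 - k2 * hsa
  refine ⟨r * γ, s, by linear_combination hars, ⟨K * (β + α * (k3 - u * Q)), -(v * Q), ?_⟩,
    ⟨β' + α' * k2, w * P, hC⟩, ⟨K * β, β', ?_⟩⟩
  · linear_combination hB + r * (β + α * (k3 - u * Q)) * hγK
  · linear_combination hA + r * β * hγK
end

section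
/- Let R be a Bézout ring. Then R has almost stable range 1 (two-sided version) if and only if for each triple (a,b,c) ∈ R³ with RaR + RbR + RcR = R and c ≠ 0, there exist λ, d ∈ R such that (λa + b)R + cR = dR and RdR = R. -/
/-- A ring has almost stable range 1 in the two-sided sense. -/
def HasAlmostStableRange1 (R : Type*) [Ring R] : Prop :=
  ∀ a b c : R, c ≠ 0 →
    TwoSidedIdeal.span {a} ⊔ TwoSidedIdeal.span {b} ⊔ TwoSidedIdeal.span {c} = ⊤ →
    ∃ l : R, TwoSidedIdeal.span {l * a + b} ⊔ TwoSidedIdeal.span {c} = ⊤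

lemma span_singleton_le' {R : Type*} [Ring R] {x : R} {I : TwoSidedIdeal R} (h : x ∈ I) :
    TwoSidedIdeal.span {x} ≤ I := fun y hy =>
  TwoSidedIdeal.mem_span_iff.mp hy I (by simpa using h)

/-- Theorem 8: a Bézout ring has almost stable range 1 iff for each triple
`(a,b,c)` with `RaR + RbR + RcR = R` and `c ≠ 0` there are `λ, d` with
`(λa + b)R + cR = dR` and `RdR = R`. -/
theorem stmt_10 {R : Type*} [Ring R] [Nontrivial R]
    (hrBez : ∀ a b : R, ∃ d : R,
      {x : R | ∃ u v : R, x = a * u + b * v} = {x : R | ∃ u : R, x = d * u})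
    (hlBez : ∀ a b : R, ∃ d : R,
      {x : R | ∃ u v : R, x = u * a + v * b} = {x : R | ∃ u : R, x = u * d}) :
    HasAlmostStableRange1 R ↔
      (∀ a b c : R, c ≠ 0 →
        TwoSidedIdeal.span {a} ⊔ TwoSidedIdeal.span {b} ⊔ TwoSidedIdeal.span {c} = ⊤ →
        ∃ l d : R,
          {x : R | ∃ u v : R, x = (l * a + b) * u + c * v} = {x : R | ∃ u : R, x = d * u} ∧
          TwoSidedIdeal.span {d} = (⊤ : TwoSidedIdeal R)) := by
  constructor
  · intro H a b c hc h
    obtain ⟨l, hl⟩ := H a b c hc h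
    obtain ⟨d, hd⟩ := hrBez (l * a + b) c
    refine ⟨l, d, hd, ?_⟩
    have h1 : (l * a + b) ∈ {x : R | ∃ u : R, x = d * u} := by
      rw [← hd]; exact ⟨1, 0, by simp⟩
    have h2 : c ∈ {x : R | ∃ u : R, x = d * u} := by
      rw [← hd]; exact ⟨0, 1, by simp⟩
    obtain ⟨u1, hu1⟩ := h1
    obtain ⟨u2, hu2⟩ := h2
    have hmem1 : (l * a + b) ∈ TwoSidedIdeal.span {d} := by
      rw [hu1]
      exact TwoSidedIdeal.mul_mem_right _ _ _ (TwoSidedIdeal.subset_span rfl)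
    have hmem2 : c ∈ TwoSidedIdeal.span {d} := by
      rw [hu2]
      exact TwoSidedIdeal.mul_mem_right _ _ _ (TwoSidedIdeal.subset_span rfl)
    rw [eq_top_iff, ← hl]
    exact sup_le (span_singleton_le' hmem1) (span_singleton_le' hmem2)
  · intro H a b c hc h
    obtain ⟨l, d, hset, hd⟩ := H a b c hc h
    refine ⟨l, ?_⟩
    have hdmem : d ∈ {x : R | ∃ u v : R, x = (l * a + b) * u + c * v} := by
      rw [hset]; exact ⟨1, by simp⟩
    obtain ⟨u, v, huv⟩ := hdmem
    have : d ∈ TwoSidedIdeal.span {l * a + b} ⊔ TwoSidedIdeal.span {c} := by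
      rw [huv]
      exact add_mem
        (le_sup_left (α := TwoSidedIdeal R)
          (TwoSidedIdeal.mul_mem_right _ _ _ (TwoSidedIdeal.subset_span rfl)))
        (le_sup_right (α := TwoSidedIdeal R)
          (TwoSidedIdeal.mul_mem_right _ _ _ (TwoSidedIdeal.subset_span rfl)))
    rw [eq_top_iff, ← hd]
    exact span_singleton_le' this
end

section
/- Every L-ring of almost stable range 1 is a ring of right almost stable range 1. -/
private lemma span_singleton_le_of_mem {R : Type*} [NonUnitalNonAssocRing R]
    {x : R} {I : TwoSidedIdeal R} (h : x ∈ I) : TwoSidedIdeal.span {x} ≤ I := by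
  intro y hy
  exact TwoSidedIdeal.mem_span_iff.mp hy I (by simpa using h)

/-- Theorem 9: every Bézout L-ring of (two-sided) almost stable range 1 is a
ring of right almost stable range 1. -/
theorem stmt_11 {R : Type*} [Ring R] [Nontrivial R]
    (hrBez : ∀ a b : R, ∃ d : R,
      {x : R | ∃ u v : R, x = a * u + b * v} = {x : R | ∃ u : R, x = d * u})
    (hlBez : ∀ a b : R, ∃ d : R,
      {x : R | ∃ u v : R, x = u * a + v * b} = {x : R | ∃ u : R, x = u * d})
    (hL : ∀ a : R, TwoSidedIdeal.span {a} = ⊤ → IsUnit a)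
    (hASR1 : ∀ a b c : R, c ≠ 0 →
      TwoSidedIdeal.span {a} ⊔ TwoSidedIdeal.span {b} ⊔ TwoSidedIdeal.span {c} = ⊤ →
      ∃ l : R, TwoSidedIdeal.span {l * a + b} ⊔ TwoSidedIdeal.span {c} = ⊤) :
    ∀ a b c : R, c ≠ 0 → (∃ u v w : R, a * u + b * v + c * w = 1) →
      ∃ l : R, ∃ u v : R, (l * a + b) * u + c * v = 1 := by
  intro a b c hc ⟨u, v, w, huvw⟩
  -- the two-sided ideals generated by a, b, c sum to ⊤
  have htop : TwoSidedIdeal.span {a} ⊔ TwoSidedIdeal.span {b} ⊔ TwoSidedIdeal.span {c} = ⊤ := by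
    rw [eq_top_iff]
    intro x _
    have h1 : (1 : R) ∈ TwoSidedIdeal.span {a} ⊔ TwoSidedIdeal.span {b} ⊔ TwoSidedIdeal.span {c} := by
      rw [← huvw]
      have ha : a * u ∈ TwoSidedIdeal.span {a} :=
        TwoSidedIdeal.mul_mem_right _ _ _ (TwoSidedIdeal.subset_span rfl)
      have hb : b * v ∈ TwoSidedIdeal.span {b} :=
        TwoSidedIdeal.mul_mem_right _ _ _ (TwoSidedIdeal.subset_span rfl)
      have hcw : c * w ∈ TwoSidedIdeal.span {c} :=
        TwoSidedIdeal.mul_mem_right _ _ _ (TwoSidedIdeal.subset_span rfl)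
      exact add_mem (add_mem
        ((le_sup_of_le_left le_sup_left : TwoSidedIdeal.span {a} ≤ _) ha)
        ((le_sup_of_le_left le_sup_right : TwoSidedIdeal.span {b} ≤ _) hb))
        ((le_sup_right : TwoSidedIdeal.span {c} ≤ _) hcw)
    have : x = x * 1 := (mul_one x).symm
    rw [this]
    exact TwoSidedIdeal.mul_mem_left _ _ _ h1
  obtain ⟨l, hl⟩ := hASR1 a b c hc htop
  obtain ⟨d, hd⟩ := hrBez (l * a + b) c
  -- l*a+b and c are in dR hence in span{d}
  have hmem1 : l * a + b ∈ {x : R | ∃ u : R, x = d * u} := by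
    rw [← hd]; exact ⟨1, 0, by simp⟩
  have hmem2 : c ∈ {x : R | ∃ u : R, x = d * u} := by
    rw [← hd]; exact ⟨0, 1, by simp⟩
  obtain ⟨u1, hu1⟩ := hmem1
  obtain ⟨u2, hu2⟩ := hmem2
  have hd1 : l * a + b ∈ TwoSidedIdeal.span {d} := by
    rw [hu1]; exact TwoSidedIdeal.mul_mem_right _ _ _ (TwoSidedIdeal.subset_span rfl)
  have hd2 : c ∈ TwoSidedIdeal.span {d} := by
    rw [hu2]; exact TwoSidedIdeal.mul_mem_right _ _ _ (TwoSidedIdeal.subset_span rfl)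
  have hdtop : TwoSidedIdeal.span {d} = ⊤ := by
    rw [eq_top_iff, ← hl]
    exact sup_le (span_singleton_le_of_mem hd1) (span_singleton_le_of_mem hd2)
  obtain ⟨du, hdu⟩ := hL d hdtop
  -- 1 ∈ dR, hence 1 ∈ (la+b)R + cR
  have h1 : (1 : R) ∈ {x : R | ∃ u : R, x = d * u} := ⟨(du⁻¹ : Rˣ), by rw [← hdu]; simp⟩
  rw [← hd] at h1
  obtain ⟨u', v', h⟩ := h1
  exact ⟨l, u', v', h.symm⟩
end

section
/- Every Bézout ring of stable range 1 has almost stable range 1 (in the two-sided sense). -/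
/-- Theorem 10 (second part): every Bézout ring of stable range 1 has almost
stable range 1 in the two-sided sense. -/
theorem stmt_13 {R : Type*} [Ring R] [Nontrivial R]
    (hrBez : ∀ a b : R, ∃ d : R,
      {x : R | ∃ u v : R, x = a * u + b * v} = {x : R | ∃ u : R, x = d * u})
    (hlBez : ∀ a b : R, ∃ d : R,
      {x : R | ∃ u v : R, x = u * a + v * b} = {x : R | ∃ u : R, x = u * d})
    (hrSR1 : ∀ a b : R, (∃ u v : R, a * u + b * v = 1) →
      ∃ l : R, IsUnit (a + b * l))
    (hlSR1 : ∀ a b : R, (∃ u v : R, u * a + v * b = 1) →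
      ∃ l : R, IsUnit (a + l * b)) :
    ∀ a b c : R, c ≠ 0 →
      TwoSidedIdeal.span {a} ⊔ TwoSidedIdeal.span {b} ⊔ TwoSidedIdeal.span {c} = ⊤ →
      ∃ l : R, TwoSidedIdeal.span {l * a + b} ⊔ TwoSidedIdeal.span {c} = ⊤ := by
  intro a b c _ htop
  -- left Bézout for a, b
  obtain ⟨d, hd⟩ := hlBez a b
  have hmem : ∀ x : R, (∃ u v : R, x = u * a + v * b) ↔ ∃ u : R, x = u * d := by
    intro x
    constructor
    · intro hx; exact (hd ▸ hx : x ∈ {x : R | ∃ u : R, x = u * d})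
    · intro hx; exact (hd ▸ hx : x ∈ {x : R | ∃ u v : R, x = u * a + v * b})
  obtain ⟨u, v, hduv⟩ := (hmem d).mpr ⟨1, (one_mul d).symm⟩
  obtain ⟨a₁, ha₁⟩ := (hmem a).mp ⟨1, 0, by noncomm_ring⟩
  obtain ⟨b₁, hb₁⟩ := (hmem b).mp ⟨0, 1, by noncomm_ring⟩
  set z : R := 1 - (u * a₁ + v * b₁) with hz
  have hzd : z * d = 0 := by
    have : (u * a₁ + v * b₁) * d = d := by
      rw [add_mul, mul_assoc, mul_assoc, ← ha₁, ← hb₁, ← hduv]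
    rw [hz, sub_mul, one_mul, this, sub_self]
  -- left Bézout for a₁, z
  obtain ⟨y, hy⟩ := hlBez a₁ z
  have hmem2 : ∀ x : R, (∃ u v : R, x = u * a₁ + v * z) ↔ ∃ u : R, x = u * y := by
    intro x
    constructor
    · intro hx; exact (hy ▸ hx : x ∈ {x : R | ∃ u : R, x = u * y})
    · intro hx; exact (hy ▸ hx : x ∈ {x : R | ∃ u v : R, x = u * a₁ + v * z})
  obtain ⟨s, t, hyst⟩ := (hmem2 y).mpr ⟨1, (one_mul y).symm⟩
  obtain ⟨r, hr⟩ := (hmem2 (u * a₁ + z)).mp ⟨u, 1, by noncomm_ring⟩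
  -- stable range 1 on (b₁, y)
  obtain ⟨l, hl⟩ := hlSR1 b₁ y ⟨v, r, by rw [← hr, hz]; abel⟩
  refine ⟨l * s, ?_⟩
  obtain ⟨w, hw⟩ := hl
  have hwd : (w : R) * d = l * s * a + b := by
    have : (w : R) * d = (b₁ + l * (s * a₁ + t * z)) * d := by rw [hw, hyst]
    rw [this, ha₁, hb₁]
    have h2 : l * t * (z * d) = 0 := by rw [hzd, mul_zero]
    calc (b₁ + l * (s * a₁ + t * z)) * d
        = b₁ * d + l * s * (a₁ * d) + l * t * (z * d) := by noncomm_ring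
      _ = b₁ * d + l * s * (a₁ * d) := by rw [h2, add_zero]
      _ = l * s * (a₁ * d) + b₁ * d := by noncomm_ring
  have hdmem : d ∈ TwoSidedIdeal.span {l * s * a + b} := by
    have : d = (↑w⁻¹ : R) * (l * s * a + b) := by
      rw [← hwd, ← mul_assoc, w.inv_mul, one_mul]
    rw [this]
    exact TwoSidedIdeal.mul_mem_left _ _ _
      (TwoSidedIdeal.subset_span (Set.mem_singleton _))
  have hamem : a ∈ TwoSidedIdeal.span {l * s * a + b} := by
    have h := TwoSidedIdeal.mul_mem_left (TwoSidedIdeal.span {l * s * a + b}) a₁ d hdmem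
    rwa [← ha₁] at h
  have hbmem : b ∈ TwoSidedIdeal.span {l * s * a + b} := by
    have h := TwoSidedIdeal.mul_mem_left (TwoSidedIdeal.span {l * s * a + b}) b₁ d hdmem
    rwa [← hb₁] at h
  rw [eq_top_iff, ← htop]
  refine sup_le (sup_le ?_ ?_) le_sup_right
  · refine le_trans ?_ le_sup_left
    intro x hx
    exact TwoSidedIdeal.mem_span_iff.mp hx _ (by
      rintro y rfl
      exact hamem)
  · refine le_trans ?_ le_sup_left
    intro x hx
    exact TwoSidedIdeal.mem_span_iff.mp hx _ (by
      rintro y rfl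
      exact hbmem)
end

section
/- Let R be a commutative Bézout domain and a a nonzero nonunit of R. If R/aR is clean then a is an element of almost stable range 1: for each (b,c) ∈ R² with aR + bR + cR = R there exists λ ∈ R such that aR + (b + cλ)R = R. -/
/-- In a commutative Bézout domain, if `a` is a nonzero nonunit with `R/aR`
clean, then `a` is an element of almost stable range 1. -/
theorem stmt_17 {R : Type*} [CommRing R] [IsDomain R]
    (hBez : ∀ x y : R, ∃ d : R, Ideal.span {x, y} = Ideal.span {d})
    (a : R) (ha : a ≠ 0) (hnu : ¬IsUnit a)
    (hclean : ∀ x : R ⧸ Ideal.span {a}, ∃ u e : R ⧸ Ideal.span {a},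
      IsUnit u ∧ IsIdempotentElem e ∧ x = u + e) :
    ∀ b c : R, (∃ u v w : R, a * u + b * v + c * w = 1) →
      ∃ l : R, ∃ u v : R, a * u + (b + c * l) * v = 1 := by
  intro b c hbc
  obtain ⟨u0, v0, w0, h1⟩ := hbc
  set I : Ideal R := Ideal.span {a} with hI
  set π : R →+* R ⧸ I := Ideal.Quotient.mk I with hπ
  have hπa : π a = 0 := Ideal.Quotient.eq_zero_iff_mem.mpr (Ideal.subset_span (by simp))
  have h1' : π b * π v0 + π c * π w0 = 1 := by
    have h := congrArg π h1
    simp only [map_add, map_mul, map_one, hπa, zero_mul, zero_add] at h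
    exact h
  obtain ⟨u, e, hu, he, hdec⟩ := hclean (π b * π v0)
  obtain ⟨U, rfl⟩ := hu
  set Ui : R ⧸ I := ((U⁻¹ : (R ⧸ I)ˣ) : R ⧸ I) with hUi
  have ru : Ui * (U : R ⧸ I) = 1 := U.inv_mul
  have hee : e * e = e := he
  have k2 : e * (1 - e) = 0 := by linear_combination -hee
  have k3 : π c * (π w0 * e * Ui) = -e := by
    linear_combination (e * Ui) * h1' - (e * Ui) * hdec - Ui * hee - e * ru
  have k4 : (π b * π v0) * Ui = 1 + e * Ui := by
    linear_combination Ui * hdec + ru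
  have key : (π b + π c * (-(π w0 * e * Ui) * (1 - π b))) *
      (e + π v0 * Ui * (1 - e)) = 1 := by
    linear_combination (-(1 - π b) * (e + π v0 * Ui * (1 - e))) * k3 +
      (π b + π v0 * Ui + Ui * (1 - e)) * k2 + (1 - e) ^ 2 * k4 + 2 * hee
  obtain ⟨l, hl⟩ := Ideal.Quotient.mk_surjective (-(π w0 * e * Ui) * (1 - π b))
  obtain ⟨v, hv⟩ := Ideal.Quotient.mk_surjective (e + π v0 * Ui * (1 - e))
  have hmem : 1 - (b + c * l) * v ∈ I := by
    rw [← Ideal.Quotient.eq_zero_iff_mem]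
    have : π (1 - (b + c * l) * v) = 1 - (π b + π c * π l) * π v := by
      push_cast [map_sub, map_mul, map_add, map_one]
      ring
    rw [this]
    rw [show π l = -(π w0 * e * Ui) * (1 - π b) from hl,
      show π v = e + π v0 * Ui * (1 - e) from hv, key]
    ring
  rw [hI, Ideal.mem_span_singleton] at hmem
  obtain ⟨u, hu⟩ := hmem
  exact ⟨l, u, v, by linear_combination -hu⟩
end
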